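/- Let M be a noncrossing matching and m_i an unmatched man. If m_prev is the matched man closest to m_i lying above him (i.e., the largest index p < i with m_p matched) with partner w_first, and m_next is the matched man closest to m_i lying below him (smallest index q > i with m_q matched) with partner w_last, then a woman w_x is accessible to m_i (the pair (m_i, w_x) crosses no edge of M) if and only if first ≤ x ≤ last, where first is the index of w_first and last is the index of w_last. -/
import Mathlib


/-- Pairs `(i,x)` and `(j,y)` cross iff `(i-j)*(x-y) < 0`. -/
def Crosses {n : ℕ} (p q : Fin n × Fin n) : Prop :=
  (((p.1 : ℕ) : ℤ) - ((q.1 : ℕ) : ℤ)) * (((p.2 : ℕ) : ℤ) - ((q.2 : ℕ) : ℤ)) < 0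

/-- A matching is a set of man-woman pairs in which no man and no woman
appears twice (a partial injection). -/
def IsMatching {n : ℕ} (M : Finset (Fin n × Fin n)) : Prop :=
  ∀ p ∈ M, ∀ q ∈ M, (p.1 = q.1 ∨ p.2 = q.2) → p = q

/-- A matching is noncrossing if no two of its pairs cross. -/
def Noncrossing {n : ℕ} (M : Finset (Fin n × Fin n)) : Prop :=
  ∀ p ∈ M, ∀ q ∈ M, ¬ Crosses p q

/-- Let `M` be a noncrossing matching and `m_i` an unmatched man. If `m_p`
(`p < i`) is the matched man closest to `m_i` above him, with partner
`w_first`, and `m_q` (`q > i`) is the matched man closest to `m_i` below him,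
with partner `w_last`, then `w_x` is accessible to `m_i` (the pair `(i, x)`
crosses no edge of `M`) iff `first ≤ x ≤ last`. -/
theorem accessible_range {n : ℕ} (M : Finset (Fin n × Fin n))
    (hM : IsMatching M) (hnc : Noncrossing M)
    (i p q first last : Fin n)
    (hi : ∀ x : Fin n, (i, x) ∉ M)
    (hp : p < i) (hpM : (p, first) ∈ M)
    (hpClose : ∀ k : Fin n, p < k → k < i → ∀ y : Fin n, (k, y) ∉ M)
    (hq : i < q) (hqM : (q, last) ∈ M)
    (hqClose : ∀ k : Fin n, i < k → k < q → ∀ y : Fin n, (k, y) ∉ M) :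
    ∀ x : Fin n, (∀ e ∈ M, ¬ Crosses (i, x) e) ↔ (first ≤ x ∧ x ≤ last) := by
  intro x
  have hpi : (p:ℕ) < (i:ℕ) := hp
  have hiq : (i:ℕ) < (q:ℕ) := hq
  constructor
  · intro h
    have h1 := h _ hpM
    have h2 := h _ hqM
    unfold Crosses at h1 h2
    simp only [not_lt] at h1 h2
    constructor
    · rw [Fin.le_def]
      by_contra hx
      push_neg at hx
      nlinarith [h1, hx, hpi]
    · rw [Fin.le_def]
      by_contra hx
      push_neg at hx
      nlinarith [h2, hx, hiq]
  · rintro ⟨hf, hl⟩ ⟨j, y⟩ he hcr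
    have hf' : (first:ℕ) ≤ (x:ℕ) := hf
    have hl' : (x:ℕ) ≤ (last:ℕ) := hl
    unfold Crosses at hcr
    simp only at hcr
    rcases mul_neg_iff.mp hcr with ⟨h1, h2⟩ | ⟨h1, h2⟩
    · -- i > j impossible here: h1 : i - j > 0, h2 : x - y < 0, so j < i, y > x
      have hji : (j:ℕ) < (i:ℕ) := by omega
      have hxy : (x:ℕ) < (y:ℕ) := by omega
      have hjp : (j:ℕ) ≤ (p:ℕ) := by
        by_contra hc
        push_neg at hc
        exact hpClose j (by exact hc) (by exact hji) y he
      rcases eq_or_lt_of_le hjp with heq | hlt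
      · have : (j, y) = (p, first) := hM _ he _ hpM (Or.inl (Fin.ext heq))
        have hyf : (y:ℕ) = (first:ℕ) := congrArg Fin.val (by injection this)
        omega
      · have hnc1 := hnc _ he _ hpM
        unfold Crosses at hnc1
        simp only [not_lt] at hnc1
        nlinarith [hnc1, hlt, hxy, hf']
    · have hij : (i:ℕ) < (j:ℕ) := by omega
      have hyx : (y:ℕ) < (x:ℕ) := by omega
      have hqj : (q:ℕ) ≤ (j:ℕ) := by
        by_contra hc
        push_neg at hc
        exact hqClose j (by exact hij) (by exact hc) y he
      rcases eq_or_lt_of_le hqj with heq | hlt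
      · have : (j, y) = (q, last) := hM _ he _ hqM (Or.inl (Fin.ext heq.symm))
        have hyl : (y:ℕ) = (last:ℕ) := congrArg Fin.val (by injection this)
        omega
      · have hnc1 := hnc _ he _ hqM
        unfold Crosses at hnc1
        simp only [not_lt] at hnc1
        nlinarith [hnc1, hlt, hyx, hl']
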